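/- (Gluing theorem) Let S₁ and S₂ be finitely generated submonoids of ℕ^d, let d₀ ∈ (S₁ ∩ S₂) \ {0} be such that G(S₁) ∩ G(S₂) = ℤ·d₀, where G(S_i) denotes the subgroup of ℤ^d generated by S_i, and let S = S₁ + S₂ := {s₁ + s₂ : s₁ ∈ S₁, s₂ ∈ S₂} (so S is the gluing of S₁ and S₂ by d₀). If b₁ ∈ PF(S₁) and b₂ ∈ PF(S₂), then b₁ + b₂ + d₀ ∈ PF(S). In particular, if S₁ and S₂ have nonempty pseudo-Frobenius sets, then so does S. -/

import Mathlib

open scoped BigOperators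

/-- The natural cast of an element of `ℕ^d` into `ℚ^d`. -/
def toQ {d : ℕ} (x : Fin d → ℕ) : Fin d → ℚ := fun i => (x i : ℚ)

/-- The natural cast of an element of `ℕ^d` into `ℤ^d`. -/
def natToZ {d : ℕ} (x : Fin d → ℕ) : Fin d → ℤ := fun i => (x i : ℤ)

/-- The cone `pos(S)` of a submonoid `S ⊆ ℕ^d`: all nonnegative rational
combinations of elements of `S`, as a subset of `ℚ^d`. -/
def posCone {d : ℕ} (S : AddSubmonoid (Fin d → ℕ)) : Set (Fin d → ℚ) :=
  {q | ∃ (k : ℕ) (c : Fin k → ℚ) (s : Fin k → (Fin d → ℕ)),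
    (∀ i, 0 ≤ c i) ∧ (∀ i, s i ∈ S) ∧ q = ∑ i, c i • toQ (s i)}

/-- The gap set `H(S) = (pos(S) \ S) ∩ ℕ^d`. -/
def gaps {d : ℕ} (S : AddSubmonoid (Fin d → ℕ)) : Set (Fin d → ℕ) :=
  {x | toQ x ∈ posCone S ∧ x ∉ S}

/-- The set of pseudo-Frobenius elements of `S`. -/
def PF {d : ℕ} (S : AddSubmonoid (Fin d → ℕ)) : Set (Fin d → ℕ) :=
  {a | a ∈ gaps S ∧ ∀ s ∈ S, s ≠ 0 → a + s ∈ S}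

/-- A term order on `ℕ^d`: a total order compatible with addition for which
`0` is the least element. -/
def IsTermOrder {d : ℕ} (r : (Fin d → ℕ) → (Fin d → ℕ) → Prop) : Prop :=
  (∀ a b, r a b ∨ r b a) ∧ (∀ a b, r a b → r b a → a = b) ∧
    (∀ a b c, r a b → r b c → r a c) ∧ (∀ a, r 0 a) ∧
    (∀ a b c, r a b → r (a + c) (b + c))

/-- The set of Frobenius elements of `S`: maxima of `H(S)` for some term order. -/
def FrobSet {d : ℕ} (S : AddSubmonoid (Fin d → ℕ)) : Set (Fin d → ℕ) :=
  {f | f ∈ gaps S ∧ ∃ r, IsTermOrder r ∧ ∀ h ∈ gaps S, r h f}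

/-- The Apéry set of `S` relative to `b`:
`Ap(S,b) = {a ∈ S : a - b ∈ pos(S) \ S}`, the difference taken in `ℚ^d`. -/
def Apery {d : ℕ} (S : AddSubmonoid (Fin d → ℕ)) (b : Fin d → ℕ) : Set (Fin d → ℕ) :=
  {a | a ∈ S ∧ (toQ a - toQ b) ∈ posCone S ∧ ¬ ∃ s ∈ S, toQ s = toQ a - toQ b}

/-- The partial order `≼_S`: `x ≼_S y` iff `y - x ∈ S`. -/
def leS {d : ℕ} (S : AddSubmonoid (Fin d → ℕ)) (x y : Fin d → ℕ) : Prop :=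
  ∃ s ∈ S, x + s = y

/-- `a` is a `≼_S`-maximal element of `X`. -/
def MaximalIn {d : ℕ} (S : AddSubmonoid (Fin d → ℕ)) (X : Set (Fin d → ℕ))
    (a : Fin d → ℕ) : Prop :=
  a ∈ X ∧ ∀ a' ∈ X, a' ≠ a → ¬ leS S a a'

/-- `S` is irreducible: it is not the intersection of two submonoids of `ℕ^d`
each properly containing it. -/
def IrreducibleMonoid {d : ℕ} (S : AddSubmonoid (Fin d → ℕ)) : Prop :=
  ¬ ∃ S₁ S₂ : AddSubmonoid (Fin d → ℕ), S < S₁ ∧ S < S₂ ∧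
    (S : Set (Fin d → ℕ)) = (S₁ : Set (Fin d → ℕ)) ∩ (S₂ : Set (Fin d → ℕ))

/-- The multiplicity of `S`: componentwise infimum of `S \ {0}`. -/
noncomputable def mult {d : ℕ} (S : AddSubmonoid (Fin d → ℕ)) : Fin d → ℕ :=
  fun i => sInf {n | ∃ s ∈ S, s ≠ 0 ∧ s i = n}

/-- `S` is a PI-monoid: `S = (a + T) ∪ {0}` for some submonoid `T` of `ℕ^d`
and some `a ∈ T \ {0}`. -/
def IsPIMonoid {d : ℕ} (S : AddSubmonoid (Fin d → ℕ)) : Prop :=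
  ∃ (T : AddSubmonoid (Fin d → ℕ)) (a : Fin d → ℕ), a ∈ T ∧ a ≠ 0 ∧
    (S : Set (Fin d → ℕ)) = {x | ∃ t ∈ T, x = a + t} ∪ {0}

/-- `G` is a minimal system of generators of `S`. -/
def IsMinimalGenSet {d : ℕ} (S : AddSubmonoid (Fin d → ℕ)) (G : Set (Fin d → ℕ)) : Prop :=
  AddSubmonoid.closure G = S ∧ ∀ G' ⊂ G, AddSubmonoid.closure G' ≠ S


lemma toQ_add' {d : ℕ} (x y : Fin d → ℕ) : toQ (x + y) = toQ x + toQ y := by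
  funext i; simp [toQ]

lemma natToZ_add' {d : ℕ} (x y : Fin d → ℕ) : natToZ (x + y) = natToZ x + natToZ y := by
  funext i; simp [natToZ]

lemma mem_posCone' {d : ℕ} {S : AddSubmonoid (Fin d → ℕ)} {x : Fin d → ℕ} (hx : x ∈ S) :
    toQ x ∈ posCone S :=
  ⟨1, fun _ => 1, fun _ => x, fun _ => zero_le_one, fun _ => hx, by simp⟩

lemma posCone_mono' {d : ℕ} {S T : AddSubmonoid (Fin d → ℕ)} (h : ∀ x ∈ S, x ∈ T) :
    posCone S ⊆ posCone T := by
  rintro q ⟨k, c, s, hc, hs, rfl⟩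
  exact ⟨k, c, s, hc, fun i => h _ (hs i), rfl⟩

lemma posCone_add' {d : ℕ} {S : AddSubmonoid (Fin d → ℕ)} {x y : Fin d → ℚ}
    (hx : x ∈ posCone S) (hy : y ∈ posCone S) : x + y ∈ posCone S := by
  obtain ⟨k, c, s, hc, hs, rfl⟩ := hx
  obtain ⟨k', c', s', hc', hs', rfl⟩ := hy
  refine ⟨k + k', Fin.append c c', Fin.append s s', ?_, ?_, ?_⟩
  · intro i
    refine Fin.addCases (fun j => ?_) (fun j => ?_) i
    · simpa using hc j
    · simpa using hc' j
  · intro i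
    refine Fin.addCases (fun j => ?_) (fun j => ?_) i
    · simpa using hs j
    · simpa using hs' j
  · rw [Fin.sum_univ_add]; simp

lemma add_ne_zero_left' {d : ℕ} {x : Fin d → ℕ} (y : Fin d → ℕ) (hx : x ≠ 0) :
    x + y ≠ 0 := by
  intro h
  apply hx
  funext i
  have := congrFun h i
  simp only [Pi.add_apply, Pi.zero_apply] at this ⊢
  omega


/-- Gluing: If `S = S₁ +_{d₀} S₂` is a gluing and
`bᵢ ∈ PF(Sᵢ)`, then `b₁ + b₂ + d₀ ∈ PF(S)`. -/
theorem gluing_pf {d : ℕ} (hd : 1 ≤ d) (S₁ S₂ S : AddSubmonoid (Fin d → ℕ))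
    (h₁ : S₁.FG) (h₂ : S₂.FG) (d₀ : Fin d → ℕ)
    (hd₀₁ : d₀ ∈ S₁) (hd₀₂ : d₀ ∈ S₂) (hd₀0 : d₀ ≠ 0)
    (hglue : AddSubgroup.closure (natToZ '' (S₁ : Set (Fin d → ℕ))) ⊓
        AddSubgroup.closure (natToZ '' (S₂ : Set (Fin d → ℕ))) =
      AddSubgroup.zmultiples (natToZ d₀))
    (hS : ∀ x, x ∈ S ↔ ∃ s₁ ∈ S₁, ∃ s₂ ∈ S₂, x = s₁ + s₂)
    (b₁ b₂ : Fin d → ℕ) (hb₁ : b₁ ∈ PF S₁) (hb₂ : b₂ ∈ PF S₂) :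
    b₁ + b₂ + d₀ ∈ PF S := by
  have hbS1 : b₁ ∉ S₁ := hb₁.1.2
  have hbS2 : b₂ ∉ S₂ := hb₂.1.2
  have hS1sub : ∀ x ∈ S₁, x ∈ S := fun x hx =>
    (hS x).2 ⟨x, hx, 0, zero_mem _, (add_zero x).symm⟩
  have hS2sub : ∀ x ∈ S₂, x ∈ S := fun x hx =>
    (hS x).2 ⟨0, zero_mem _, x, hx, (zero_add x).symm⟩
  have hb1d : b₁ + d₀ ∈ S₁ := hb₁.2 d₀ hd₀₁ hd₀0
  have hb2d : b₂ + d₀ ∈ S₂ := hb₂.2 d₀ hd₀₂ hd₀0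
  refine ⟨⟨?_, ?_⟩, ?_⟩
  · -- cone membership
    rw [toQ_add', toQ_add']
    exact posCone_add' (posCone_add' (posCone_mono' hS1sub hb₁.1.1)
      (posCone_mono' hS2sub hb₂.1.1)) (mem_posCone' ((hS d₀).2 ⟨d₀, hd₀₁, 0, zero_mem _, (add_zero d₀).symm⟩))
  · -- not in S
    intro hmem
    obtain ⟨s₁, hs₁, s₂, hs₂, hEq⟩ := (hS _).1 hmem
    set z : Fin d → ℤ := natToZ b₁ - natToZ s₁ with hzdef
    have hz1 : z ∈ AddSubgroup.closure (natToZ '' (S₁ : Set (Fin d → ℕ))) := by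
      have e : z = natToZ (b₁ + d₀) - natToZ d₀ - natToZ s₁ := by
        rw [natToZ_add', hzdef]; abel
      rw [e]
      exact sub_mem (sub_mem
        (AddSubgroup.subset_closure ⟨_, hb1d, rfl⟩)
        (AddSubgroup.subset_closure ⟨_, hd₀₁, rfl⟩))
        (AddSubgroup.subset_closure ⟨_, hs₁, rfl⟩)
    have hz2 : z ∈ AddSubgroup.closure (natToZ '' (S₂ : Set (Fin d → ℕ))) := by
      have e : z = natToZ s₂ - natToZ (b₂ + d₀) := by
        funext i
        have h := congrFun hEq i
        simp only [Pi.add_apply] at h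
        simp only [hzdef, Pi.sub_apply, natToZ, Pi.add_apply]
        push_cast
        omega
      rw [e]
      exact sub_mem (AddSubgroup.subset_closure ⟨_, hs₂, rfl⟩)
        (AddSubgroup.subset_closure ⟨_, hb2d, rfl⟩)
    have hzm : z ∈ AddSubgroup.zmultiples (natToZ d₀) := by
      rw [← hglue]; exact ⟨hz1, hz2⟩
    obtain ⟨k, hk⟩ := AddSubgroup.mem_zmultiples_iff.mp hzm
    have hcoord : ∀ i, (b₁ i : ℤ) - (s₁ i : ℤ) = k * (d₀ i : ℤ) := by
      intro i
      have := congrFun hk i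
      simpa [hzdef, natToZ, mul_comm] using this.symm
    rcases le_or_gt 0 k with hk0 | hk0
    · -- b₁ = s₁ + k.toNat • d₀ ∈ S₁, contradiction
      apply hbS1
      have : b₁ = s₁ + k.toNat • d₀ := by
        funext i
        have h := hcoord i
        have hkz : ((k.toNat : ℤ)) = k := Int.toNat_of_nonneg hk0
        have : (b₁ i : ℤ) = (s₁ i : ℤ) + (k.toNat : ℤ) * (d₀ i : ℤ) := by
          rw [hkz]; linarith
        have h2 : (s₁ + k.toNat • d₀) i = s₁ i + k.toNat * d₀ i := by
          simp [Pi.add_apply]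
        rw [h2]
        exact_mod_cast this
      rw [this]
      exact add_mem hs₁ (nsmul_mem hd₀₁ _)
    · -- b₂ = s₂ + (-(k+1)).toNat • d₀ ∈ S₂, contradiction
      apply hbS2
      have hk1 : k + 1 ≤ 0 := hk0
      have : b₂ = s₂ + (-(k+1)).toNat • d₀ := by
        funext i
        have h := hcoord i
        have hEqi := congrFun hEq i
        simp only [Pi.add_apply] at hEqi
        have hkz : ((((-(k+1)).toNat : ℤ))) = -(k+1) := Int.toNat_of_nonneg (by omega)
        have hmain : (b₂ i : ℤ) = (s₂ i : ℤ) + ((-(k+1)).toNat : ℤ) * (d₀ i : ℤ) := by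
          rw [hkz]
          have : (b₁ i : ℤ) + (b₂ i : ℤ) + (d₀ i : ℤ) = (s₁ i : ℤ) + (s₂ i : ℤ) := by
            exact_mod_cast hEqi
          linarith
        have h2 : (s₂ + (-(k+1)).toNat • d₀) i = s₂ i + (-(k+1)).toNat * d₀ i := by
          simp [Pi.add_apply]
        rw [h2]
        exact_mod_cast hmain
      rw [this]
      exact add_mem hs₂ (nsmul_mem hd₀₂ _)
  · -- PF additivity
    intro s hsS hs0
    obtain ⟨s₁, hs₁, s₂, hs₂, rfl⟩ := (hS s).1 hsS
    by_cases h1 : s₁ = 0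
    · subst h1
      have hs2ne : s₂ ≠ 0 := by simpa using hs0
      have m1 : b₁ + d₀ ∈ S₁ := hb1d
      have m2 : b₂ + s₂ ∈ S₂ := hb₂.2 s₂ hs₂ hs2ne
      refine (hS _).2 ⟨b₁ + d₀, m1, b₂ + s₂, m2, ?_⟩
      abel
    · have m1 : b₁ + s₁ ∈ S₁ := hb₁.2 s₁ hs₁ h1
      have m2 : b₂ + (d₀ + s₂) ∈ S₂ := hb₂.2 (d₀ + s₂) (add_mem hd₀₂ hs₂)
        (add_ne_zero_left' s₂ hd₀0)
      refine (hS _).2 ⟨b₁ + s₁, m1, b₂ + (d₀ + s₂), m2, ?_⟩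
      abel
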